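/- Let a_1, …, a_n be integers with each a_i ≥ 2, and set p = K(a_1,…,a_n) and q = K(a_2,…,a_n). Then K(a_n,…,a_1) = p, and the integer q' = K(a_1,…,a_{n−1}) satisfies 0 < q' < p and q·q' ≡ 1 (mod p); equivalently, if [a_1,…,a_n]^- = p/q then [a_n,…,a_1]^- = p/q*, where q* is the unique integer with 0 < q* < p and q·q* ≡ 1 (mod p). -/

import Mathlib

/-- The negative continuant `K(a₁,…,aₙ)`, defined by `K() = 1`, `K(a) = a`, and
`K(a₁,a₂,…,aₙ) = a₁·K(a₂,…,aₙ) − K(a₃,…,aₙ)`. -/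
def negCont : List ℤ → ℤ
  | [] => 1
  | [a] => a
  | a :: b :: l => a * negCont (b :: l) - negCont l

/-- `K` with the last entry removed, with the convention that it is `0` on the
empty list (i.e. `K` of a sequence of length `-1` is `0`). -/
def hC : List ℤ → ℤ
  | [] => 0
  | l => negCont l.dropLast

theorem hC_eq (l : List ℤ) (hl : l ≠ []) : hC l = negCont l.dropLast := by
  cases l with
  | nil => exact absurd rfl hl
  | cons a m => rfl

theorem negCont_cons (a : ℤ) (l : List ℤ) (hl : l ≠ []) :
    negCont (a :: l) = a * negCont l - negCont l.tail := by
  cases l with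
  | nil => exact absurd rfl hl
  | cons b m => rfl

theorem hC_cons (a : ℤ) (l : List ℤ) (hl : l ≠ []) :
    hC (a :: l) = a * hC l - hC l.tail := by
  cases l with
  | nil => exact absurd rfl hl
  | cons b m =>
    cases m with
    | nil => simp [hC, negCont]
    | cons c m' => simp [hC, List.dropLast, negCont]

theorem negCont_append (a : ℤ) : (l : List ℤ) →
    negCont (l ++ [a]) = negCont l * a - hC l
  | [] => by simp [negCont, hC]
  | [b] => by simp [negCont, hC]
  | b :: c :: m => by
    have h1 := negCont_append a (c :: m)
    have h2 := negCont_append a m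
    have key : negCont ((b :: c :: m) ++ [a]) =
        b * negCont ((c :: m) ++ [a]) - negCont (m ++ [a]) := by
      cases m with
      | nil => simp [negCont]
      | cons d m' => simp [negCont]
    rw [key, h1, h2, hC_cons b (c :: m) (by simp),
      negCont_cons b (c :: m) (by simp)]
    simp only [List.tail_cons]
    ring

theorem negCont_rev : ∀ l : List ℤ, negCont l.reverse = negCont l ∧
    (l ≠ [] → hC l.reverse = negCont l.tail)
  | [] => ⟨rfl, fun h => absurd rfl h⟩
  | a :: l => by
    obtain ⟨ih1, ih2⟩ := negCont_rev l
    constructor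
    · rw [List.reverse_cons, negCont_append, ih1]
      rcases eq_or_ne l [] with rfl | hl
      · simp [negCont, hC]
      · rw [negCont_cons a l hl, ih2 hl]; ring
    · intro _
      rw [List.reverse_cons, hC_eq _ (by simp), List.tail_cons]
      simpa using ih1

theorem negCont_pos : ∀ l : List ℤ, (∀ a ∈ l, 2 ≤ a) →
    1 ≤ negCont l ∧ (l ≠ [] → negCont l.tail < negCont l)
  | [] => fun _ => ⟨le_refl 1, fun h => absurd rfl h⟩
  | a :: l => fun h => by
    have ha : 2 ≤ a := h a (by simp)
    obtain ⟨ih1, ih2⟩ := negCont_pos l (fun b hb => h b (List.mem_cons_of_mem _ hb))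
    rcases eq_or_ne l [] with rfl | hl
    · refine ⟨by simpa [negCont] using by omega, fun _ => ?_⟩
      simpa [negCont] using by omega
    · have hlt := ih2 hl
      have h2l : 2 * negCont l ≤ a * negCont l :=
        mul_le_mul_of_nonneg_right ha (by linarith)
      rw [negCont_cons a l hl]
      constructor
      · linarith
      · intro _
        simp only [List.tail_cons]
        linarith

theorem negCont_det : ∀ l : List ℤ, l ≠ [] →
    negCont l.dropLast * negCont l.tail - negCont l * hC l.tail = 1
  | [] => fun h => absurd rfl h
  | [a] => fun _ => by simp [negCont, hC]
  | a :: b :: m => fun _ => by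
    have ih := negCont_det (b :: m) (by simp)
    have hd : negCont ((a :: b :: m).dropLast) = hC (a :: b :: m) :=
      (hC_eq _ (by simp)).symm
    rw [hd, hC_cons a (b :: m) (by simp), negCont_cons a (b :: m) (by simp)]
    simp only [List.tail_cons] at *
    rw [hC_eq (b :: m) (by simp)]
    linear_combination ih

/-- Let `a₁,…,aₙ` (`n ≥ 1`) be integers with each `aᵢ ≥ 2`, and set
`p = K(a₁,…,aₙ)`, `q = K(a₂,…,aₙ)`.  Then `K(aₙ,…,a₁) = p`, and the integer
`q' = K(a₁,…,aₙ₋₁)` satisfies `0 < q' < p` and `q·q' ≡ 1 (mod p)`; equivalently,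
if `[a₁,…,aₙ]⁻ = p/q` then `[aₙ,…,a₁]⁻ = p/q*`, where `q*` is the unique integer
with `0 < q* < p` and `q·q* ≡ 1 (mod p)`. -/
theorem stmt7 (L : List ℤ) (hL : L ≠ []) (h2 : ∀ a ∈ L, 2 ≤ a) :
    negCont L.reverse = negCont L ∧
    0 < negCont L.dropLast ∧ negCont L.dropLast < negCont L ∧
    negCont L.tail * negCont L.dropLast ≡ 1 [ZMOD negCont L] ∧
    negCont L.reverse.tail = negCont L.dropLast := by
  have hrev : negCont L.reverse = negCont L := (negCont_rev L).1
  have htail : L.reverse.tail = L.dropLast.reverse := List.tail_reverse (l := L)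
  have hrevtail : negCont L.reverse.tail = negCont L.dropLast := by
    rw [htail]; exact (negCont_rev L.dropLast).1
  have hpos : 0 < negCont L.dropLast := by
    have := (negCont_pos L.dropLast
      (fun a ha => h2 a (List.dropLast_subset L ha))).1
    linarith
  have hlt : negCont L.dropLast < negCont L := by
    have hne : L.reverse ≠ [] := by simpa using hL
    have := (negCont_pos L.reverse
      (fun a ha => h2 a (List.mem_reverse.mp ha))).2 hne
    rw [hrev, hrevtail] at this
    exact this
  have hdet := negCont_det L hL
  refine ⟨hrev, hpos, hlt, ?_, hrevtail⟩
  have : negCont L.tail * negCont L.dropLast - 1 = negCont L * hC L.tail := by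
    linarith
  exact (Int.modEq_iff_dvd.mpr ⟨hC L.tail, by linarith⟩).symm
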